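/- The function φ_→ is complex-differentiable on the open set B(0,1)∖[0,∞). -/

import Mathlib

open Complex Metric

/-- `φ_→(z) = 2z·∫_0^1 (1−tz)^{1/2}·(−tz)^{−1/2} dt`, the integral of
`2(1−s)^{1/2}(−s)^{−1/2}` over the straight segment from `0` to `z` (principal powers). -/
noncomputable def phiRight (z : ℂ) : ℂ :=
  2 * z *
    ∫ t in (0:ℝ)..1, (1 - (t : ℂ) * z) ^ ((1 : ℂ)/2) * (-((t : ℂ) * z)) ^ (-((1 : ℂ)/2))

open MeasureTheory intervalIntegral

lemma aux_slit1 {x : ℂ} (hx : ‖x‖ < 1) {t : ℝ} (ht0 : 0 < t) (ht1 : t ≤ 1) :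
    (1 - (t : ℂ) * x) ∈ Complex.slitPlane := by
  left
  simp only [Complex.sub_re, Complex.one_re, Complex.mul_re, Complex.ofReal_re,
    Complex.ofReal_im, zero_mul, sub_zero]
  have h1 : |x.re| ≤ ‖x‖ := Complex.abs_re_le_norm x
  have h2 : -1 < x.re ∧ x.re < 1 := abs_lt.mp (lt_of_le_of_lt h1 hx)
  nlinarith [h2.1, h2.2]

lemma aux_slit2 {x : ℂ} (hx : x ∉ Complex.ofReal '' Set.Ici 0) {t : ℝ} (ht0 : 0 < t) :
    (-((t : ℂ) * x)) ∈ Complex.slitPlane := by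
  by_cases him : x.im = 0
  · left
    have hre : x.re < 0 := by
      by_contra h
      push_neg at h
      exact hx ⟨x.re, h, Complex.ext (by simp) (by simp [him])⟩
    simp only [Complex.neg_re, Complex.mul_re, Complex.ofReal_re, Complex.ofReal_im,
      zero_mul, him, mul_zero, sub_zero]
    nlinarith
  · right
    simp only [Complex.neg_im, Complex.mul_im, Complex.ofReal_re, Complex.ofReal_im,
      zero_mul, add_zero]
    intro h
    rcases mul_eq_zero.mp (neg_eq_zero.mp h) with h' | h'
    · exact absurd h' (ne_of_gt ht0)
    · exact him h'

lemma aux_norm_cpow (w : ℂ) (y : ℝ) : ‖w ^ ((y : ℝ) : ℂ)‖ = ‖w‖ ^ y := by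
  rw [norm_cpow_real]

/-- `φ_→` is complex-differentiable on `B(0,1)∖[0,∞)`. -/
theorem stmt_15 :
    DifferentiableOn ℂ phiRight (ball (0 : ℂ) 1 \ (Complex.ofReal '' Set.Ici 0)) := by
  have hclosed : IsClosed (Complex.ofReal '' Set.Ici 0) :=
    Complex.isometry_ofReal.isClosedEmbedding.isClosedMap _ isClosed_Ici
  have hopen : IsOpen (ball (0 : ℂ) 1 \ (Complex.ofReal '' Set.Ici 0)) :=
    isOpen_ball.sdiff hclosed
  intro z₀ hz₀
  apply DifferentiableAt.differentiableWithinAt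
  obtain ⟨δ, hδpos, hδsub⟩ := Metric.isOpen_iff.mp hopen z₀ hz₀
  have hz₀ball : ‖z₀‖ < 1 := by simpa [mem_ball, dist_eq_norm] using hz₀.1
  have hz₀ne : z₀ ≠ 0 := by
    intro h
    exact hz₀.2 ⟨0, Set.self_mem_Ici, by simp [h]⟩
  have hz₀pos : 0 < ‖z₀‖ := norm_pos_iff.mpr hz₀ne
  set ε : ℝ := min (δ/2) (min (‖z₀‖/2) ((1 - ‖z₀‖)/2)) with hεdef
  have hεpos : 0 < ε :=
    lt_min (by linarith) (lt_min (by linarith) (by linarith))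
  have hεδ : ε ≤ δ/2 := min_le_left _ _
  have hεm : ε ≤ ‖z₀‖/2 := le_trans (min_le_right _ _) (min_le_left _ _)
  have hεr : ε ≤ (1 - ‖z₀‖)/2 := le_trans (min_le_right _ _) (min_le_right _ _)
  set m : ℝ := ‖z₀‖/2 with hmdef
  set r : ℝ := (1 + ‖z₀‖)/2 with hrdef
  have hm : 0 < m := by positivity
  have hr1 : r < 1 := by rw [hrdef]; linarith
  have hr0 : 0 < 1 - r := by linarith
  -- facts about points of the ball
  have hball : ∀ x ∈ ball z₀ ε,
      (x ∈ ball (0:ℂ) 1 \ (Complex.ofReal '' Set.Ici 0)) ∧ m ≤ ‖x‖ ∧ ‖x‖ ≤ r := by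
    intro x hx
    have hd : ‖x - z₀‖ < ε := by simpa [mem_ball, dist_eq_norm] using hx
    have hS : x ∈ ball (0:ℂ) 1 \ (Complex.ofReal '' Set.Ici 0) := by
      apply hδsub
      simp only [mem_ball, dist_eq_norm]
      linarith
    have t1 : ‖x‖ ≤ ‖z₀‖ + ‖x - z₀‖ := by
      calc ‖x‖ = ‖z₀ + (x - z₀)‖ := by ring_nf
        _ ≤ ‖z₀‖ + ‖x - z₀‖ := norm_add_le _ _
    have t2 : ‖z₀‖ ≤ ‖x‖ + ‖x - z₀‖ := by
      calc ‖z₀‖ = ‖x - (x - z₀)‖ := by ring_nf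
        _ ≤ ‖x‖ + ‖x - z₀‖ := norm_sub_le _ _
    exact ⟨hS, by rw [hmdef]; linarith, by rw [hrdef]; linarith⟩
  -- the functions
  set F : ℂ → ℝ → ℂ := fun x t =>
    (1 - (t : ℂ) * x) ^ ((1 : ℂ)/2) * (-((t : ℂ) * x)) ^ (-((1 : ℂ)/2)) with hFdef
  set F' : ℂ → ℝ → ℂ := fun x t =>
    ((1 : ℂ)/2 * (1 - (t : ℂ) * x) ^ ((1 : ℂ)/2 - 1) * (-(t : ℂ)))
        * (-((t : ℂ) * x)) ^ (-((1 : ℂ)/2))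
      + (1 - (t : ℂ) * x) ^ ((1 : ℂ)/2)
        * ((-((1 : ℂ)/2)) * (-((t : ℂ) * x)) ^ (-((1 : ℂ)/2) - 1) * (-(t : ℂ))) with hF'def
  have hIoc : Set.uIoc (0:ℝ) 1 = Set.Ioc (0:ℝ) 1 := Set.uIoc_of_le zero_le_one
  -- exponent rewrites
  have e₁ : ((1 : ℂ)/2) = (((1/2 : ℝ)) : ℂ) := by norm_num
  have e₂ : (-((1 : ℂ)/2)) = (((-(1/2) : ℝ)) : ℂ) := by push_cast; norm_num
  have e₃ : ((1 : ℂ)/2 - 1) = (((-(1/2) : ℝ)) : ℂ) := by push_cast; norm_num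
  have e₄ : (-((1 : ℂ)/2) - 1) = (((-(3/2) : ℝ)) : ℂ) := by push_cast; norm_num
  -- continuity in t, for suitable x
  have hc1 : ∀ (x : ℂ), ‖x‖ < 1 → ∀ (a : ℂ),
      ContinuousOn (fun t : ℝ => (1 - (t : ℂ) * x) ^ a) (Set.Ioc (0:ℝ) 1) := by
    intro x hx a t ht
    have hb : ContinuousAt (fun s : ℝ => 1 - (s : ℂ) * x) t := by fun_prop
    exact (hb.cpow continuousAt_const (aux_slit1 hx ht.1 ht.2)).continuousWithinAt
  have hc2 : ∀ (x : ℂ), x ∉ Complex.ofReal '' Set.Ici 0 → ∀ (a : ℂ),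
      ContinuousOn (fun t : ℝ => (-((t : ℂ) * x)) ^ a) (Set.Ioc (0:ℝ) 1) := by
    intro x hx a t ht
    have hb : ContinuousAt (fun s : ℝ => -((s : ℂ) * x)) t := by fun_prop
    exact (hb.cpow continuousAt_const (aux_slit2 hx ht.1)).continuousWithinAt
  have hmeasF : ∀ x ∈ ball z₀ ε, AEStronglyMeasurable (F x)
      (volume.restrict (Set.uIoc (0:ℝ) 1)) := by
    intro x hx
    rw [hIoc]
    obtain ⟨hS, _, hxr⟩ := hball x hx
    exact (((hc1 x (lt_of_le_of_lt hxr hr1) _).mul (hc2 x hS.2 _))).aestronglyMeasurable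
      measurableSet_Ioc
  have hmeasF' : AEStronglyMeasurable (F' z₀) (volume.restrict (Set.uIoc (0:ℝ) 1)) := by
    rw [hIoc]
    have hcontneg : ContinuousOn (fun t : ℝ => (-(t : ℂ))) (Set.Ioc (0:ℝ) 1) := by fun_prop
    have hA : ContinuousOn (fun t : ℝ =>
        ((1 : ℂ)/2 * (1 - (t : ℂ) * z₀) ^ ((1 : ℂ)/2 - 1) * (-(t : ℂ)))
          * (-((t : ℂ) * z₀)) ^ (-((1 : ℂ)/2))) (Set.Ioc (0:ℝ) 1) :=
      ((continuousOn_const.mul (hc1 z₀ hz₀ball _)).mul hcontneg).mul (hc2 z₀ hz₀.2 _)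
    have hB : ContinuousOn (fun t : ℝ =>
        (1 - (t : ℂ) * z₀) ^ ((1 : ℂ)/2)
          * ((-((1 : ℂ)/2)) * (-((t : ℂ) * z₀)) ^ (-((1 : ℂ)/2) - 1) * (-(t : ℂ))))
        (Set.Ioc (0:ℝ) 1) :=
      (hc1 z₀ hz₀ball _).mul ((continuousOn_const.mul (hc2 z₀ hz₀.2 _)).mul hcontneg)
    exact (hA.add hB).aestronglyMeasurable measurableSet_Ioc
  -- basic norm facts
  have hnormF : ∀ (x : ℂ) (t : ℝ), 0 < t →
      ‖F x t‖ = ‖1 - (t : ℂ) * x‖ ^ ((1:ℝ)/2) * (t * ‖x‖) ^ (-(1/2) : ℝ) := by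
    intro x t ht
    have ha2 : ‖-((t : ℂ) * x)‖ = t * ‖x‖ := by
      rw [norm_neg, norm_mul, Complex.norm_real, Real.norm_eq_abs, abs_of_pos ht]
    rw [hFdef]
    simp only
    rw [norm_mul, e₂, e₁, aux_norm_cpow, aux_norm_cpow, ha2]
  -- uniform bounds
  set C : ℝ := 1/2 * ((1 - r) ^ (-(1/2) : ℝ) * m ^ (-(1/2) : ℝ)) + m ^ (-(3/2) : ℝ) with hCdef
  have hbound : ∀ x : ℂ, m ≤ ‖x‖ → ‖x‖ ≤ r → ∀ t : ℝ, 0 < t → t ≤ 1 →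
      ‖F' x t‖ ≤ C * t ^ (-(1/2) : ℝ) := by
    intro x hxm hxr t ht0 ht1
    have hx0 : 0 < ‖x‖ := lt_of_lt_of_le hm hxm
    have ha2 : ‖-((t : ℂ) * x)‖ = t * ‖x‖ := by
      rw [norm_neg, norm_mul, Complex.norm_real, Real.norm_eq_abs, abs_of_pos ht0]
    have ha1l : 1 - r ≤ ‖1 - (t : ℂ) * x‖ := by
      have h := norm_sub_norm_le (1 : ℂ) ((t : ℂ) * x)
      have h2 : ‖(t : ℂ) * x‖ = t * ‖x‖ := by
        rw [norm_mul, Complex.norm_real, Real.norm_eq_abs, abs_of_pos ht0]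
      rw [h2, norm_one] at h
      nlinarith
    have ha1u : ‖1 - (t : ℂ) * x‖ ≤ 2 := by
      have h := norm_sub_le (1 : ℂ) ((t : ℂ) * x)
      have h2 : ‖(t : ℂ) * x‖ = t * ‖x‖ := by
        rw [norm_mul, Complex.norm_real, Real.norm_eq_abs, abs_of_pos ht0]
      rw [h2, norm_one] at h
      nlinarith
    have hnt : ‖(-(t : ℂ))‖ = t := by
      rw [norm_neg, Complex.norm_real, Real.norm_eq_abs, abs_of_pos ht0]
    have hhalf : ‖(1 : ℂ)/2‖ = 1/2 := by norm_num
    have hnhalf : ‖(-((1 : ℂ)/2))‖ = 1/2 := by rw [norm_neg]; norm_num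
    set a1 : ℝ := ‖1 - (t : ℂ) * x‖ with ha1def
    have ha1pos : 0 < a1 := lt_of_lt_of_le hr0 ha1l
    -- norms of the two summands
    have hT1 : ‖((1 : ℂ)/2 * (1 - (t : ℂ) * x) ^ ((1 : ℂ)/2 - 1) * (-(t : ℂ)))
        * (-((t : ℂ) * x)) ^ (-((1 : ℂ)/2))‖
        = 1/2 * a1 ^ (-(1/2) : ℝ) * t * (t * ‖x‖) ^ (-(1/2) : ℝ) := by
      rw [norm_mul, norm_mul, norm_mul, e₃, e₂, aux_norm_cpow, aux_norm_cpow, ha2, hnt, hhalf]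
    have hT2 : ‖(1 - (t : ℂ) * x) ^ ((1 : ℂ)/2)
        * ((-((1 : ℂ)/2)) * (-((t : ℂ) * x)) ^ (-((1 : ℂ)/2) - 1) * (-(t : ℂ)))‖
        = a1 ^ ((1:ℝ)/2) * (1/2 * (t * ‖x‖) ^ (-(3/2) : ℝ) * t) := by
      rw [norm_mul, norm_mul, norm_mul, hnhalf, e₄, e₁, aux_norm_cpow, aux_norm_cpow, ha2, hnt]
    have hmulr : ∀ s : ℝ, (t * ‖x‖) ^ (s : ℝ) = t ^ s * ‖x‖ ^ s := fun s =>
      Real.mul_rpow ht0.le (norm_nonneg x)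
    -- rpow arithmetic in t
    have htt1 : t * t ^ (-(1/2) : ℝ) ≤ t ^ (-(1/2) : ℝ) := by
      have h1 : t * t ^ (-(1/2) : ℝ) = t ^ ((1:ℝ)/2) := by
        nth_rewrite 1 [← Real.rpow_one t]
        rw [← Real.rpow_add ht0]
        norm_num
      rw [h1]
      exact Real.rpow_le_rpow_of_exponent_ge ht0 ht1 (by norm_num)
    have htt2 : t * t ^ (-(3/2) : ℝ) = t ^ (-(1/2) : ℝ) := by
      nth_rewrite 1 [← Real.rpow_one t]
      rw [← Real.rpow_add ht0]
      norm_num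
    -- bounds on the chunks
    have hb1 : a1 ^ (-(1/2) : ℝ) ≤ (1 - r) ^ (-(1/2) : ℝ) :=
      Real.rpow_le_rpow_of_nonpos hr0 ha1l (by norm_num)
    have hb2 : ‖x‖ ^ (-(1/2) : ℝ) ≤ m ^ (-(1/2) : ℝ) :=
      Real.rpow_le_rpow_of_nonpos hm hxm (by norm_num)
    have hb3 : ‖x‖ ^ (-(3/2) : ℝ) ≤ m ^ (-(3/2) : ℝ) :=
      Real.rpow_le_rpow_of_nonpos hm hxm (by norm_num)
    have hb4 : a1 ^ ((1:ℝ)/2) ≤ 2 := by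
      calc a1 ^ ((1:ℝ)/2) ≤ (2:ℝ) ^ ((1:ℝ)/2) :=
            Real.rpow_le_rpow ha1pos.le ha1u (by norm_num)
        _ ≤ (2:ℝ) ^ (1:ℝ) := Real.rpow_le_rpow_of_exponent_le one_le_two (by norm_num)
        _ = 2 := Real.rpow_one 2
    have hpos : (0:ℝ) < t ^ (-(1/2) : ℝ) := Real.rpow_pos_of_pos ht0 _
    calc ‖F' x t‖ ≤ ‖((1 : ℂ)/2 * (1 - (t : ℂ) * x) ^ ((1 : ℂ)/2 - 1) * (-(t : ℂ)))
          * (-((t : ℂ) * x)) ^ (-((1 : ℂ)/2))‖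
          + ‖(1 - (t : ℂ) * x) ^ ((1 : ℂ)/2)
          * ((-((1 : ℂ)/2)) * (-((t : ℂ) * x)) ^ (-((1 : ℂ)/2) - 1) * (-(t : ℂ)))‖ :=
            norm_add_le _ _
      _ = 1/2 * a1 ^ (-(1/2) : ℝ) * t * (t * ‖x‖) ^ (-(1/2) : ℝ)
          + a1 ^ ((1:ℝ)/2) * (1/2 * (t * ‖x‖) ^ (-(3/2) : ℝ) * t) := by rw [hT1, hT2]
      _ = 1/2 * (a1 ^ (-(1/2) : ℝ) * ‖x‖ ^ (-(1/2) : ℝ)) * (t * t ^ (-(1/2) : ℝ))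
          + a1 ^ ((1:ℝ)/2) * (1/2 * ‖x‖ ^ (-(3/2) : ℝ)) * (t * t ^ (-(3/2) : ℝ)) := by
            rw [hmulr, hmulr]; ring
      _ ≤ 1/2 * ((1 - r) ^ (-(1/2) : ℝ) * m ^ (-(1/2) : ℝ)) * t ^ (-(1/2) : ℝ)
          + 2 * (1/2 * m ^ (-(3/2) : ℝ)) * t ^ (-(1/2) : ℝ) := by
            rw [htt2]
            have k1 : a1 ^ (-(1/2) : ℝ) * ‖x‖ ^ (-(1/2) : ℝ)
                ≤ (1 - r) ^ (-(1/2) : ℝ) * m ^ (-(1/2) : ℝ) :=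
              mul_le_mul hb1 hb2 (Real.rpow_nonneg (norm_nonneg x) _)
                (Real.rpow_nonneg hr0.le _)
            have k2 : a1 ^ ((1:ℝ)/2) * (1/2 * ‖x‖ ^ (-(3/2) : ℝ))
                ≤ 2 * (1/2 * m ^ (-(3/2) : ℝ)) :=
              mul_le_mul hb4 (mul_le_mul_of_nonneg_left hb3 (by norm_num))
                (by positivity) (by norm_num)
            apply add_le_add
            · exact mul_le_mul (mul_le_mul_of_nonneg_left k1 (by norm_num)) htt1
                (by positivity) (by positivity)
            · exact mul_le_mul_of_nonneg_right k2 hpos.le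
      _ = C * t ^ (-(1/2) : ℝ) := by rw [hCdef]; ring
  -- integrability of the bound
  have hbound_int : IntervalIntegrable (fun t : ℝ => C * t ^ (-(1/2) : ℝ))
      volume (0:ℝ) 1 :=
    (intervalIntegral.intervalIntegrable_rpow' (by norm_num)).const_mul C
  -- integrability of F z₀
  have hF_int : IntervalIntegrable (F z₀) volume (0:ℝ) 1 := by
    set C₀ : ℝ := 2 * m ^ (-(1/2) : ℝ) with hC₀def
    apply IntervalIntegrable.mono_fun'
      ((intervalIntegral.intervalIntegrable_rpow' (r := (-(1/2) : ℝ))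
        (by norm_num)).const_mul C₀) (hmeasF z₀ (mem_ball_self hεpos))
    rw [Filter.EventuallyLE, ae_restrict_iff' measurableSet_uIoc]
    apply Filter.Eventually.of_forall
    intro t ht
    rw [hIoc] at ht
    have ht0 := ht.1
    have ht1 := ht.2
    have hx0 : 0 < ‖z₀‖ := hz₀pos
    rw [hnormF z₀ t ht0]
    have ha1u : ‖1 - (t : ℂ) * z₀‖ ≤ 2 := by
      have h := norm_sub_le (1 : ℂ) ((t : ℂ) * z₀)
      have h2 : ‖(t : ℂ) * z₀‖ = t * ‖z₀‖ := by
        rw [norm_mul, Complex.norm_real, Real.norm_eq_abs, abs_of_pos ht0]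
      rw [h2, norm_one] at h
      nlinarith
    have hb4 : ‖1 - (t : ℂ) * z₀‖ ^ ((1:ℝ)/2) ≤ 2 := by
      calc ‖1 - (t : ℂ) * z₀‖ ^ ((1:ℝ)/2) ≤ (2:ℝ) ^ ((1:ℝ)/2) :=
            Real.rpow_le_rpow (norm_nonneg _) ha1u (by norm_num)
        _ ≤ (2:ℝ) ^ (1:ℝ) := Real.rpow_le_rpow_of_exponent_le one_le_two (by norm_num)
        _ = 2 := Real.rpow_one 2
    have hsplit : (t * ‖z₀‖) ^ (-(1/2) : ℝ) = t ^ (-(1/2) : ℝ) * ‖z₀‖ ^ (-(1/2) : ℝ) :=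
      Real.mul_rpow ht0.le (norm_nonneg _)
    have hzm : ‖z₀‖ ^ (-(1/2) : ℝ) ≤ m ^ (-(1/2) : ℝ) :=
      Real.rpow_le_rpow_of_nonpos hm (by rw [hmdef]; linarith) (by norm_num)
    have hpos : (0:ℝ) < t ^ (-(1/2) : ℝ) := Real.rpow_pos_of_pos ht0 _
    calc ‖1 - (t : ℂ) * z₀‖ ^ ((1:ℝ)/2) * (t * ‖z₀‖) ^ (-(1/2) : ℝ)
        = (‖1 - (t : ℂ) * z₀‖ ^ ((1:ℝ)/2) * ‖z₀‖ ^ (-(1/2) : ℝ)) * t ^ (-(1/2) : ℝ) := by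
          rw [hsplit]; ring
      _ ≤ (2 * m ^ (-(1/2) : ℝ)) * t ^ (-(1/2) : ℝ) := by
          apply mul_le_mul _ le_rfl hpos.le (by positivity)
          exact mul_le_mul hb4 hzm (Real.rpow_nonneg (norm_nonneg _) _) (by norm_num)
      _ = C₀ * t ^ (-(1/2) : ℝ) := by rw [hC₀def]
  -- differentiability in x
  have h_diff : ∀ᵐ t ∂(volume : Measure ℝ), t ∈ Set.uIoc (0:ℝ) 1 →
      ∀ x ∈ ball z₀ ε, HasDerivAt (fun y => F y t) (F' x t) x := by
    apply Filter.Eventually.of_forall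
    intro t ht x hx
    rw [hIoc] at ht
    obtain ⟨hS, _, hxr⟩ := hball x hx
    have hx1 : ‖x‖ < 1 := lt_of_le_of_lt hxr hr1
    have hd1 : HasDerivAt (fun y : ℂ => 1 - (t : ℂ) * y) (-(t : ℂ)) x := by
      simpa using ((hasDerivAt_id x).const_mul (t : ℂ)).const_sub 1
    have hd2 : HasDerivAt (fun y : ℂ => -((t : ℂ) * y)) (-(t : ℂ)) x := by
      simpa using ((hasDerivAt_id x).const_mul (t : ℂ)).fun_neg
    exact (hd1.cpow_const (aux_slit1 hx1 ht.1 ht.2)).mul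
      (hd2.cpow_const (aux_slit2 hS.2 ht.1))
  -- bound hypothesis in the right form
  have h_bound : ∀ᵐ t ∂(volume : Measure ℝ), t ∈ Set.uIoc (0:ℝ) 1 →
      ∀ x ∈ ball z₀ ε, ‖F' x t‖ ≤ C * t ^ (-(1/2) : ℝ) := by
    apply Filter.Eventually.of_forall
    intro t ht x hx
    rw [hIoc] at ht
    obtain ⟨_, hxm, hxr⟩ := hball x hx
    exact hbound x hxm hxr t ht.1 ht.2
  have hF_meas : ∀ᶠ x in nhds z₀, AEStronglyMeasurable (F x)
      (volume.restrict (Set.uIoc (0:ℝ) 1)) :=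
    Filter.eventually_of_mem (ball_mem_nhds z₀ hεpos) hmeasF
  have key := (intervalIntegral.hasDerivAt_integral_of_dominated_loc_of_deriv_le (ball_mem_nhds z₀ hεpos)
    hF_meas hF_int hmeasF' h_bound hbound_int h_diff).2
  have hint_diff : DifferentiableAt ℂ (fun x => ∫ t in (0:ℝ)..1, F x t) z₀ :=
    key.differentiableAt
  have : phiRight = fun z => 2 * z * ∫ t in (0:ℝ)..1, F z t := rfl
  rw [this]
  exact ((differentiableAt_id.const_mul (2:ℂ)).mul hint_diff)
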